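/- Let A and B be disjoint subsets of {1,…,p} with |A| + |B| ≤ 6s*, and let X_B be the n×|B| submatrix of X with columns (X_j : j ∈ B). Then for every t ∈ ℝ^B, ‖X_Bᵀ (I − Φ_A) X_B t‖ ≥ n ν ‖t‖; equivalently, the smallest eigenvalue of the positive definite matrix X_Bᵀ(I − Φ_A)X_B is at least nν. -/

import Mathlib

open scoped BigOperators
open Finset

noncomputable section

/-- Span of the columns `X j`, `j ∈ S`. -/
def colSpan {n p : ℕ} (X : Fin p → EuclideanSpace ℝ (Fin n)) (S : Finset (Fin p)) :
    Submodule ℝ (EuclideanSpace ℝ (Fin n)) :=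
  Submodule.span ℝ (X '' ↑S)

/-- `Φ_S`, the orthogonal projection of ℝ^n onto the span of the columns in `S`. -/
noncomputable def proj {n p : ℕ} (X : Fin p → EuclideanSpace ℝ (Fin n)) (S : Finset (Fin p)) :
    EuclideanSpace ℝ (Fin n) →ₗ[ℝ] EuclideanSpace ℝ (Fin n) :=
  (colSpan X S).subtype ∘ₗ ((colSpan X S).orthogonalProjectionOnto).toLinearMap

/-- Restricted eigenvalue condition: `‖X_S w‖² ≥ n ν ‖w‖²` for all `S` with `|S| ≤ m`. -/
def RECond {n p : ℕ} (X : Fin p → EuclideanSpace ℝ (Fin n)) (ν : ℝ) (m : ℕ) : Prop :=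
  ∀ S : Finset (Fin p), S.card ≤ m → ∀ w : Fin p → ℝ,
    (n : ℝ) * ν * ∑ j ∈ S, w j ^ 2 ≤ ‖∑ j ∈ S, w j • X j‖ ^ 2

end

/-- for disjoint A, B with |A|+|B| ≤ 6s*, ‖X_Bᵀ (I − Φ_A) X_B t‖ ≥ nν‖t‖.
The vector X_Bᵀ (I − Φ_A) X_B t ∈ ℝ^B has j-th coordinate ⟨X_j, (I − Φ_A) X_B t⟩. -/
theorem stmt1 {n p s : ℕ} (hn : 0 < n) (hp : 0 < p) (hs : 0 < s)
    (X : Fin p → EuclideanSpace ℝ (Fin n))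
    (hX : ∀ j, ‖X j‖ = Real.sqrt n)
    {ν : ℝ} (hν : 0 < ν) (hRE : RECond X ν (6 * s))
    (A B : Finset (Fin p)) (hdisj : Disjoint A B) (hcard : A.card + B.card ≤ 6 * s)
    (t : Fin p → ℝ) :
    (n : ℝ) * ν * Real.sqrt (∑ j ∈ B, t j ^ 2) ≤
      Real.sqrt (∑ j ∈ B,
        (inner ℝ (X j) ((∑ k ∈ B, t k • X k) - proj X A (∑ k ∈ B, t k • X k)) : ℝ) ^ 2) := by
  classical
  set v : EuclideanSpace ℝ (Fin n) := ∑ k ∈ B, t k • X k with hv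
  set q : EuclideanSpace ℝ (Fin n) := proj X A v with hq
  set r : EuclideanSpace ℝ (Fin n) := v - q with hr
  have hqmem : q ∈ colSpan X A := by
    simp only [hq, proj, LinearMap.coe_comp, Function.comp_apply,
      ContinuousLinearMap.coe_coe, Submodule.coe_subtype]
    exact Submodule.coe_mem _
  have hrperp : r ∈ (colSpan X A)ᗮ := by
    simpa only [hr, hq, proj, LinearMap.coe_comp, Function.comp_apply,
      ContinuousLinearMap.coe_coe, Submodule.coe_subtype, Submodule.starProjection_apply] using
      Submodule.sub_starProjection_mem_orthogonal (K := colSpan X A) v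
  have hqr : (inner ℝ q r : ℝ) = 0 := hrperp q hqmem
  -- coefficients for q
  obtain ⟨l, hl_supp, hl⟩ :=
    (Finsupp.mem_span_image_iff_linearCombination ℝ).mp hqmem
  have hql : q = ∑ j ∈ A, l j • X j := by
    rw [← hl, Finsupp.linearCombination_apply]
    exact Finsupp.sum_of_support_subset l ((Finsupp.mem_supported ℝ l).mp hl_supp) _
      (fun i _ => zero_smul ℝ _)
  set c : Fin p → ℝ := fun j => if j ∈ B then t j else - l j with hc
  have hrsum : r = ∑ j ∈ A ∪ B, c j • X j := by
    rw [Finset.sum_union hdisj]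
    have h1 : ∑ j ∈ A, c j • X j = ∑ j ∈ A, (- l j) • X j := by
      refine Finset.sum_congr rfl fun j hj => ?_
      have : j ∉ B := Finset.disjoint_left.mp hdisj hj
      simp [hc, this]
    have h2 : ∑ j ∈ B, c j • X j = ∑ j ∈ B, t j • X j := by
      refine Finset.sum_congr rfl fun j hj => ?_
      simp [hc, hj]
    rw [h1, h2, hr, hql, hv]
    simp [neg_smul, Finset.sum_neg_distrib]
    abel
  -- RE bound
  have hcardU : (A ∪ B).card ≤ 6 * s :=
    le_trans (Finset.card_union_le A B) hcard
  have hRE' := hRE (A ∪ B) hcardU c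
  have hsplit : ∑ j ∈ A ∪ B, c j ^ 2 = (∑ j ∈ A, c j ^ 2) + ∑ j ∈ B, t j ^ 2 := by
    rw [Finset.sum_union hdisj]
    congr 1
    refine Finset.sum_congr rfl fun j hj => by simp [hc, hj]
  have hSle : (n : ℝ) * ν * ∑ j ∈ B, t j ^ 2 ≤ ‖r‖ ^ 2 := by
    rw [hrsum]
    refine le_trans ?_ hRE'
    rw [hsplit]
    have h0 : (0:ℝ) ≤ ∑ j ∈ A, c j ^ 2 := Finset.sum_nonneg fun j _ => sq_nonneg _
    nlinarith [mul_nonneg (mul_nonneg (Nat.cast_nonneg n) hν.le) h0]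
  -- inner products
  set u : Fin p → ℝ := fun j => (inner ℝ (X j) r : ℝ) with hu
  have hsum_tu : ∑ j ∈ B, t j * u j = ‖r‖ ^ 2 := by
    have : ∑ j ∈ B, t j * u j = (inner ℝ v r : ℝ) := by
      rw [hv, sum_inner]
      exact Finset.sum_congr rfl fun j _ => (real_inner_smul_left _ _ _).symm
    rw [this]
    have hv' : v = r + q := by rw [hr]; abel
    rw [hv', inner_add_left, hqr, add_zero, real_inner_self_eq_norm_sq]
  -- Cauchy-Schwarz
  set S := ∑ j ∈ B, t j ^ 2 with hS
  set U := ∑ j ∈ B, u j ^ 2 with hU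
  have hS0 : 0 ≤ S := Finset.sum_nonneg fun j _ => sq_nonneg _
  have hU0 : 0 ≤ U := Finset.sum_nonneg fun j _ => sq_nonneg _
  have hCS : ‖r‖ ^ 2 ≤ Real.sqrt S * Real.sqrt U := by
    have h1 : (∑ j ∈ B, t j * u j) ^ 2 ≤ S * U := sum_mul_sq_le_sq_mul_sq B t u
    rw [hsum_tu] at h1
    calc ‖r‖ ^ 2 = Real.sqrt ((‖r‖ ^ 2) ^ 2) := by
          rw [Real.sqrt_sq (sq_nonneg _)]
      _ ≤ Real.sqrt (S * U) := Real.sqrt_le_sqrt h1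
      _ = Real.sqrt S * Real.sqrt U := Real.sqrt_mul hS0 U
  -- conclude
  show (n : ℝ) * ν * Real.sqrt S ≤ Real.sqrt U
  rcases eq_or_lt_of_le hS0 with h | h
  · rw [← h, Real.sqrt_zero, mul_zero]
    exact Real.sqrt_nonneg _
  · have hsq : Real.sqrt S > 0 := Real.sqrt_pos.mpr h
    have hSeq : S = Real.sqrt S * Real.sqrt S := (Real.mul_self_sqrt hS0).symm
    have key : ((n : ℝ) * ν * Real.sqrt S) * Real.sqrt S ≤ Real.sqrt U * Real.sqrt S := by
      calc ((n : ℝ) * ν * Real.sqrt S) * Real.sqrt S = (n : ℝ) * ν * S := by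
            rw [mul_assoc, ← hSeq]
        _ ≤ Real.sqrt S * Real.sqrt U := le_trans hSle hCS
        _ = Real.sqrt U * Real.sqrt S := by ring
    exact le_of_mul_le_mul_right key hsq
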